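/- Let Φ be a reduced crystallographic root system spanning a finite-dimensional vector space V over ℚ, with a fixed base (system of simple roots) Π. Let J ⊆ Π be a subset, and let Γ be a finite group of linear automorphisms of V, each of which maps Φ onto Φ, maps Π onto Π, and maps J onto J. Let N be the subgroup of the root lattice ℤΦ generated by the simple roots in Π∖J together with all differences α − σ(α) for α ∈ J and σ ∈ Γ, let π : ℤΦ → ℤΦ/N be the quotient homomorphism, and set Φ_{J,Γ} = π(Φ) ∖ {0}. Let β ∈ π(Π) ∩ Φ_{J,Γ} be a simple relative root. Then there exists a proper parabolic subset Σ of Φ_{J,Γ}, i.e., a subset Σ ⊊ Φ_{J,Γ} such that Σ ∪ (−Σ) = Φ_{J,Γ} and such that whenever α₁, α₂ ∈ Σ and α₁ + α₂ ∈ Φ_{J,Γ} one has α₁ + α₂ ∈ Σ, which contains every α ∈ Φ_{J,Γ} satisfying both α + β ∉ Φ_{J,Γ} and α + β ≠ 0. -/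

import Mathlib

section aux
variable {V : Type*} [AddCommGroup V] [Module ℚ V]

/-- Cauchy–Schwarz for a positive definite symmetric bilinear form, with equality case. -/
lemma bilin_cs (B : V →ₗ[ℚ] V →ₗ[ℚ] ℚ)
    (hBsymm : ∀ x y : V, B x y = B y x)
    (hBpos : ∀ x : V, x ≠ 0 → 0 < B x x) (x y : V) (hy : y ≠ 0) :
    B x y * B x y ≤ B x x * B y y ∧
      (B x y * B x y = B x x * B y y → x = (B x y / B y y) • y) := by
  have hyy : 0 < B y y := hBpos y hy
  set c : ℚ := B x y / B y y with hc
  have hval : B (x - c • y) (x - c • y) = B x x - B x y * B x y / B y y := by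
    have h1 : B (x - c • y) (x - c • y)
        = B x x - c * B x y - (c * B x y - c * (c * B y y)) := by
      simp only [map_sub, map_smul, LinearMap.sub_apply, LinearMap.smul_apply,
        smul_eq_mul, hBsymm y x]
      ring
    rw [h1, hc]
    field_simp
    ring
  have hge : 0 ≤ B (x - c • y) (x - c • y) := by
    rcases eq_or_ne (x - c • y) 0 with h | h
    · simp [h]
    · exact le_of_lt (hBpos _ h)
  constructor
  · rw [hval] at hge
    have h2 : B x y * B x y / B y y ≤ B x x := by linarith
    calc B x y * B x y = B x y * B x y / B y y * B y y := by field_simp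
    _ ≤ B x x * B y y := by
        have := mul_le_mul_of_nonneg_right h2 (le_of_lt hyy)
        linarith
  · intro heq
    have : B (x - c • y) (x - c • y) = 0 := by
      rw [hval, heq]
      field_simp
      ring
    have hz : x - c • y = 0 := by
      by_contra hne
      exact absurd this (ne_of_gt (hBpos _ hne))
    have := sub_eq_zero.mp hz
    simpa [hc] using this

/-- If two roots have negative pairing and are not opposite, their sum is a root. -/
lemma root_add (B : V →ₗ[ℚ] V →ₗ[ℚ] ℚ)
    (hBsymm : ∀ x y : V, B x y = B y x)
    (hBpos : ∀ x : V, x ≠ 0 → 0 < B x x)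
    (Φ : Set V) (h0 : (0 : V) ∉ Φ)
    (hreflect : ∀ α ∈ Φ, ∀ β ∈ Φ, β - (2 * B β α / B α α) • α ∈ Φ)
    (hcrys : ∀ α ∈ Φ, ∀ β ∈ Φ, ∃ n : ℤ, 2 * B β α = (n : ℚ) * B α α)
    (hred : ∀ α ∈ Φ, ∀ c : ℚ, c • α ∈ Φ → c = 1 ∨ c = -1)
    {α δ : V} (hα : α ∈ Φ) (hδ : δ ∈ Φ) (hneg : B α δ < 0) (hne : α ≠ -δ) :
    α + δ ∈ Φ := by
  have hα0 : α ≠ 0 := fun h => h0 (h ▸ hα)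
  have hδ0 : δ ≠ 0 := fun h => h0 (h ▸ hδ)
  have hαα : 0 < B α α := hBpos α hα0
  have hδδ : 0 < B δ δ := hBpos δ hδ0
  obtain ⟨n, hn⟩ := hcrys δ hδ α hα
  obtain ⟨m, hm⟩ := hcrys α hα δ hδ
  have hδα : B δ α = B α δ := hBsymm δ α
  have hnq : (n : ℚ) < 0 := by
    by_contra h
    push_neg at h
    nlinarith
  have hmq : (m : ℚ) < 0 := by
    by_contra h
    push_neg at h
    nlinarith
  have hnZ : n < 0 := by exact_mod_cast hnq
  have hmZ : m < 0 := by exact_mod_cast hmq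
  by_cases hn1 : n = -1
  · have := hreflect δ hδ α hα
    have hsc : 2 * B α δ / B δ δ = -1 := by
      rw [hn, hn1]
      push_cast
      field_simp
    rw [hsc] at this
    simpa using this
  by_cases hm1 : m = -1
  · have := hreflect α hα δ hδ
    have hsc : 2 * B δ α / B α α = -1 := by
      rw [hm, hm1]
      push_cast
      field_simp
    rw [hsc] at this
    rw [add_comm]
    simpa using this
  -- both ≤ -2 : Cauchy-Schwarz equality case
  exfalso
  have hn2 : n ≤ -2 := by omega
  have hm2 : m ≤ -2 := by omega
  have hnm : (4 : ℚ) ≤ (n : ℚ) * (m : ℚ) := by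
    have : (2:ℤ) ≤ (-n) := by omega
    have : (2:ℤ) ≤ (-m) := by omega
    have h4 : (4:ℤ) ≤ n * m := by nlinarith
    exact_mod_cast h4
  have hprod : 4 * (B α δ * B α δ) = ((n:ℚ) * m) * (B α α * B δ δ) := by
    have : (2 * B α δ) * (2 * B δ α) = ((n:ℚ) * B δ δ) * ((m:ℚ) * B α α) := by
      rw [hn, hm]
    rw [hδα] at this
    nlinarith [this]
  obtain ⟨hcs, hcseq⟩ := bilin_cs B hBsymm hBpos α δ hδ0
  have heq : B α δ * B α δ = B α α * B δ δ := by nlinarith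
  have hαc := hcseq heq
  set c : ℚ := B α δ / B δ δ with hc
  have hcneg : c < 0 := div_neg_of_neg_of_pos hneg hδδ
  rcases hred δ hδ c (by rw [← hαc]; exact hα) with h1 | h1
  · rw [h1] at hcneg; norm_num at hcneg
  · rw [h1] at hαc
    simp at hαc
    exact hne hαc
end aux

/-- **Existence of a parabolic subset avoiding a simple relative root**
(Lemma 4.8 of the paper).

`Φ` is a reduced crystallographic root system spanning a finite-dimensional
`ℚ`-vector space `V` (crystallographicity and reducedness are expressed via a
Weyl-invariant positive-definite symmetric bilinear form `B`), `Δ` is a base of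
`Φ`, `J ⊆ Δ`, and `Γ` is a finite group of linear automorphisms of `V`
preserving `Φ`, `Δ` and `J`.  `N` is the subgroup of the root lattice generated
by `Δ \ J` and the differences `α - σ α` (`α ∈ J`, `σ ∈ Γ`), `π` is the
quotient map, and `ΦJΓ = π(Φ) \ {0}`.  For every simple relative root
`β ∈ π(Δ) ∩ ΦJΓ` there exists a proper parabolic subset `S ⊊ ΦJΓ`
(`S ∪ (-S) = ΦJΓ`, closed under addition within `ΦJΓ`) containing every
`a ∈ ΦJΓ` with `a + β ∉ ΦJΓ` and `a + β ≠ 0`. -/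
theorem exists_proper_parabolic_subset_of_simple_relative_root
    {V : Type*} [AddCommGroup V] [Module ℚ V] [FiniteDimensional ℚ V]
    (B : V →ₗ[ℚ] V →ₗ[ℚ] ℚ)
    (hBsymm : ∀ x y : V, B x y = B y x)
    (hBpos : ∀ x : V, x ≠ 0 → 0 < B x x)
    (Φ : Set V) (hfin : Φ.Finite) (h0 : (0 : V) ∉ Φ)
    (hspan : Submodule.span ℚ Φ = ⊤)
    (hreflect : ∀ α ∈ Φ, ∀ β ∈ Φ, β - (2 * B β α / B α α) • α ∈ Φ)
    (hcrys : ∀ α ∈ Φ, ∀ β ∈ Φ, ∃ n : ℤ, 2 * B β α = (n : ℚ) * B α α)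
    (hred : ∀ α ∈ Φ, ∀ c : ℚ, c • α ∈ Φ → c = 1 ∨ c = -1)
    (Δ : Set V) (hΔΦ : Δ ⊆ Φ)
    (hΔindep : LinearIndependent ℚ (fun x : Δ => (x : V)))
    (hΔbase : ∀ α ∈ Φ, α ∈ AddSubmonoid.closure Δ ∨ -α ∈ AddSubmonoid.closure Δ)
    (J : Set V) (hJ : J ⊆ Δ)
    (Γ : Subgroup (V ≃ₗ[ℚ] V)) (hΓfin : (Γ : Set (V ≃ₗ[ℚ] V)).Finite)
    (hΓΦ : ∀ σ ∈ Γ, ⇑σ '' Φ = Φ)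
    (hΓΔ : ∀ σ ∈ Γ, ⇑σ '' Δ = Δ)
    (hΓJ : ∀ σ ∈ Γ, ⇑σ '' J = J)
    (N : AddSubgroup V)
    (hN : N = AddSubgroup.closure
      ((Δ \ J) ∪ {x | ∃ α ∈ J, ∃ σ ∈ Γ, x = α - σ α}))
    (π : V →+ V ⧸ N) (hπ : π = QuotientAddGroup.mk' N)
    (ΦJΓ : Set (V ⧸ N)) (hΦJΓ : ΦJΓ = (⇑π '' Φ) \ {0})
    (β : V ⧸ N) (hβ : β ∈ (⇑π '' Δ) ∩ ΦJΓ) :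
    ∃ S : Set (V ⧸ N),
      S ⊆ ΦJΓ ∧ S ≠ ΦJΓ ∧
      S ∪ ((fun x => -x) '' S) = ΦJΓ ∧
      (∀ a₁ ∈ S, ∀ a₂ ∈ S, a₁ + a₂ ∈ ΦJΓ → a₁ + a₂ ∈ S) ∧
      (∀ a ∈ ΦJΓ, a + β ∉ ΦJΓ → a + β ≠ 0 → a ∈ S) := by
  classical
  subst hΦJΓ hπ
  set Φq : Set (V ⧸ N) := (⇑(QuotientAddGroup.mk' N) '' Φ) \ {0} with hΦq
  -- basic root system facts
  have hΦ0 : ∀ {α : V}, α ∈ Φ → α ≠ 0 := fun {α} hα h => h0 (h ▸ hα)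
  have hBne : ∀ {α : V}, α ∈ Φ → B α α ≠ 0 := fun {α} hα => ne_of_gt (hBpos α (hΦ0 hα))
  have hnegΦ : ∀ {α : V}, α ∈ Φ → -α ∈ Φ := by
    intro α hα
    have h2 : 2 * B α α / B α α = 2 := by
      rw [mul_div_assoc, div_self (hBne hα), mul_one]
    have := hreflect α hα α hα
    rw [h2, two_smul] at this
    have h3 : α - (α + α) = -α := by abel
    rwa [h3] at this
  -- membership in N from generators
  have hNmem1 : ∀ x ∈ Δ \ J, x ∈ N := fun x hx =>
    hN ▸ AddSubgroup.subset_closure (Or.inl hx)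
  have hNmem2 : ∀ α ∈ J, ∀ σ ∈ Γ, α - σ α ∈ N := fun α hα σ hσ =>
    hN ▸ AddSubgroup.subset_closure (Or.inr ⟨α, hα, σ, hσ, rfl⟩)
  -- quotient facts
  have hq0 : ∀ x : V, QuotientAddGroup.mk' N x = 0 ↔ x ∈ N := by
    intro x
    rw [QuotientAddGroup.mk'_apply]
    exact QuotientAddGroup.eq_zero_iff x
  have hπeq : ∀ x y : V, x - y ∈ N → QuotientAddGroup.mk' N x = QuotientAddGroup.mk' N y := by
    intro x y hxy
    have : QuotientAddGroup.mk' N (x - y) = 0 := (hq0 _).mpr hxy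
    rw [map_sub] at this
    exact sub_eq_zero.mp this
  -- the simple root b downstairs
  obtain ⟨⟨b, hbΔ, hbβ⟩, hβΦq⟩ := hβ
  have hβne : β ≠ 0 := hβΦq.2
  have hbΦ : b ∈ Φ := hΔΦ hbΔ
  have hbJ : b ∈ J := by
    by_contra hbJ
    exact hβne (hbβ ▸ (hq0 b).mpr (hNmem1 b ⟨hbΔ, hbJ⟩))
  -- the root lattice
  set L : AddSubgroup V := AddSubgroup.closure Δ with hL
  have hΔL : ∀ x ∈ Δ, x ∈ L := fun x hx => AddSubgroup.subset_closure hx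
  have hΦL : ∀ α ∈ Φ, α ∈ L := by
    intro α hα
    have hmono : ∀ x ∈ AddSubmonoid.closure Δ, x ∈ L := fun x hx =>
      (AddSubmonoid.closure_le (S := L.toAddSubmonoid)).mpr
        (fun y hy => AddSubgroup.subset_closure hy) hx
    rcases hΔbase α hα with h | h
    · exact hmono α h
    · simpa using neg_mem (hmono _ h)
  have hNL : ∀ x ∈ N, x ∈ L := by
    intro x hx
    rw [hN] at hx
    refine (AddSubgroup.closure_le _).mpr ?_ hx
    rintro y (⟨hyΔ, -⟩ | ⟨α, hαJ, σ, hσ, rfl⟩)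
    · exact hΔL y hyΔ
    · refine sub_mem (hΔL α (hJ hαJ)) (hΔL _ ?_)
      have : σ α ∈ ⇑σ '' J := ⟨α, hαJ, rfl⟩
      rw [hΓJ σ hσ] at this
      exact hJ this
  -- Δ spans
  have hspanΔ : Submodule.span ℚ Δ = ⊤ := by
    refine le_antisymm le_top ?_
    rw [← hspan]
    refine Submodule.span_le.mpr ?_
    intro α hα
    have hmono : ∀ x ∈ AddSubmonoid.closure Δ, x ∈ Submodule.span ℚ Δ := fun x hx =>
      (AddSubmonoid.closure_le (S := (Submodule.span ℚ Δ).toAddSubmonoid)).mpr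
        (fun y hy => Submodule.subset_span hy) hx
    rcases hΔbase α hα with h | h
    · exact hmono α h
    · simpa using neg_mem (hmono _ h)
  -- the basis given by Δ
  haveI hΔfin : Finite ↥Δ := (hfin.subset hΔΦ).to_subtype
  let bb : Module.Basis ↥Δ ℚ V := Module.Basis.mk hΔindep (by rw [Subtype.range_coe]; exact le_of_eq hspanΔ.symm)
  have hbbrepr : ∀ i j : ↥Δ, bb.repr (↑i) j = if i = j then 1 else 0 := by
    intro i j
    have : (↑i : V) = bb i := (Module.Basis.mk_apply hΔindep _ i).symm
    rw [this, Module.Basis.repr_self, Finsupp.single_apply]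
  -- the orbit of b and the counting functional f
  let OF : Finset ↥Δ := Set.Finite.toFinset (Set.toFinite {j : ↥Δ | ∃ σ ∈ Γ, σ b = ↑j})
  have hOF : ∀ j : ↥Δ, j ∈ OF ↔ ∃ σ ∈ Γ, σ b = ↑j := by
    intro j
    simp [OF, Set.Finite.mem_toFinset]
  let f : V →ₗ[ℚ] ℚ := ∑ j ∈ OF, bb.coord j
  have hfval : ∀ i : ↥Δ, f ↑i = if i ∈ OF then 1 else 0 := by
    intro i
    have : f ↑i = ∑ j ∈ OF, bb.repr (↑i) j := by
      simp [f, LinearMap.sum_apply, Module.Basis.coord_apply]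
    rw [this]
    have : ∀ j ∈ OF, bb.repr (↑i) j = if i = j then 1 else 0 := fun j _ => hbbrepr i j
    rw [Finset.sum_congr rfl this, Finset.sum_ite_eq OF i (fun _ => (1 : ℚ))]
  have hOFJ : ∀ j : ↥Δ, j ∈ OF → (↑j : V) ∈ J := by
    intro j hj
    obtain ⟨σ, hσ, hσb⟩ := (hOF j).mp hj
    have : σ b ∈ ⇑σ '' J := ⟨b, hbJ, rfl⟩
    rw [hΓJ σ hσ] at this
    exact hσb ▸ this
  have hfN : ∀ x ∈ N, f x = 0 := by
    have hker : AddSubgroup.closure ((Δ \ J) ∪ {x | ∃ α ∈ J, ∃ σ ∈ Γ, x = α - σ α})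
        ≤ AddMonoidHom.ker f.toAddMonoidHom := by
      refine (AddSubgroup.closure_le _).mpr ?_
      rintro y (⟨hyΔ, hyJ⟩ | ⟨α, hαJ, σ, hσ, rfl⟩) <;>
        refine SetLike.mem_coe.mpr (AddMonoidHom.mem_ker.mpr ?_)
      · show f y = 0
        have : f ↑(⟨y, hyΔ⟩ : ↥Δ) = if (⟨y, hyΔ⟩ : ↥Δ) ∈ OF then 1 else 0 := hfval _
        rw [if_neg (fun hmem => hyJ (hOFJ _ hmem))] at this
        exact this
      · show f (α - σ α) = 0
        have hαΔ : α ∈ Δ := hJ hαJ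
        have hσαJ : σ α ∈ J := by
          have : σ α ∈ ⇑σ '' J := ⟨α, hαJ, rfl⟩
          rwa [hΓJ σ hσ] at this
        have hσαΔ : σ α ∈ Δ := hJ hσαJ
        have hiff : (⟨α, hαΔ⟩ : ↥Δ) ∈ OF ↔ (⟨σ α, hσαΔ⟩ : ↥Δ) ∈ OF := by
          rw [hOF, hOF]
          constructor
          · rintro ⟨τ, hτ, hτb⟩
            refine ⟨σ * τ, mul_mem hσ hτ, ?_⟩
            show σ (τ b) = σ α
            rw [show τ b = α from hτb]
          · rintro ⟨τ, hτ, hτb⟩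
            refine ⟨σ⁻¹ * τ, mul_mem (inv_mem hσ) hτ, ?_⟩
            have : (σ⁻¹ : V ≃ₗ[ℚ] V) (σ α) = α := σ.symm_apply_apply α
            simp only [Subtype.coe_mk] at hτb ⊢
            show (σ⁻¹ : V ≃ₗ[ℚ] V) (τ b) = α
            rw [hτb]
            exact this
        rw [map_sub, hfval ⟨α, hαΔ⟩, hfval ⟨σ α, hσαΔ⟩]
        by_cases hα : (⟨α, hαΔ⟩ : ↥Δ) ∈ OF
        · rw [if_pos hα, if_pos (hiff.mp hα), sub_self]
        · rw [if_neg hα, if_neg (fun h => hα (hiff.mpr h)), sub_self]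
    intro x hx
    exact AddMonoidHom.mem_ker.mp (hker (hN ▸ hx))
  have hfb : f b = 1 := by
    have hmem : (⟨b, hbΔ⟩ : ↥Δ) ∈ OF := (hOF _).mpr ⟨1, one_mem Γ, rfl⟩
    have := hfval ⟨b, hbΔ⟩
    rwa [if_pos hmem] at this
  -- the finite group H generated by Γ and the simple reflections in Δ \ J
  set Gen : Set (V ≃ₗ[ℚ] V) :=
    (↑Γ : Set (V ≃ₗ[ℚ] V)) ∪
      {e | ∃ δ, δ ∈ Δ \ J ∧ ∀ x, e x = x - (2 * B x δ / B δ δ) • δ} with hGen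
  set H : Subgroup (V ≃ₗ[ℚ] V) := Subgroup.closure Gen with hH
  have hΓH : ∀ σ ∈ Γ, σ ∈ H := fun σ hσ => Subgroup.subset_closure (Or.inl hσ)
  -- existence of reflections
  have hrex : ∀ δ ∈ Δ \ J, ∃ e : V ≃ₗ[ℚ] V,
      e ∈ H ∧ ∀ x, e x = x - (2 * B x δ / B δ δ) • δ := by
    intro δ hδ
    have hδΦ : δ ∈ Φ := hΔΦ hδ.1
    have h2 : ((2 / B δ δ) • (B.flip δ)) δ = 2 := by
      simp only [LinearMap.smul_apply, LinearMap.flip_apply, smul_eq_mul]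
      rw [div_mul_cancel₀ 2 (hBne hδΦ)]
    refine ⟨Module.reflection h2, Subgroup.subset_closure (Or.inr ⟨δ, hδ, ?_⟩), ?_⟩ <;>
    · intro x
      rw [Module.reflection_apply]
      simp only [LinearMap.smul_apply, LinearMap.flip_apply, smul_eq_mul]
      congr 1
      rw [div_mul_eq_mul_div, mul_comm]
  -- reflections are involutive
  have hinvol : ∀ δ ∈ Δ \ J, ∀ e : V ≃ₗ[ℚ] V,
      (∀ x, e x = x - (2 * B x δ / B δ δ) • δ) → ∀ x, e (e x) = x := by
    intro δ hδ e he x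
    have hδΦ : δ ∈ Φ := hΔΦ hδ.1
    have hBδ : B δ δ ≠ 0 := hBne hδΦ
    rw [he (e x), he x]
    have hBex : B (x - (2 * B x δ / B δ δ) • δ) δ = - B x δ := by
      rw [map_sub, map_smul]
      simp only [LinearMap.sub_apply, LinearMap.smul_apply, smul_eq_mul]
      field_simp
      ring
    rw [hBex]
    have : 2 * -B x δ / B δ δ = -(2 * B x δ / B δ δ) := by ring
    rw [this, neg_smul, sub_neg_eq_add]
    abel
  -- key induction: elements of H preserve Φ and act trivially modulo N on the lattice L
  have hΓstep : ∀ σ, σ ∈ Γ → ∀ x ∈ L, x - σ x ∈ N := by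
    intro σ hσ x hx
    rw [hL] at hx
    induction hx using AddSubgroup.closure_induction with
    | mem γ hγ =>
      by_cases hγJ : γ ∈ J
      · exact hNmem2 γ hγJ σ hσ
      · refine sub_mem (hNmem1 γ ⟨hγ, hγJ⟩) (hNmem1 (σ γ) ⟨?_, ?_⟩)
        · have : σ γ ∈ ⇑σ '' Δ := ⟨γ, hγ, rfl⟩
          rwa [hΓΔ σ hσ] at this
        · intro hσγJ
          have : (σ⁻¹ : V ≃ₗ[ℚ] V) (σ γ) ∈ ⇑(σ⁻¹ : V ≃ₗ[ℚ] V) '' J := ⟨σ γ, hσγJ, rfl⟩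
          rw [hΓJ σ⁻¹ (inv_mem hσ)] at this
          have hid : (σ⁻¹ : V ≃ₗ[ℚ] V) (σ γ) = γ := σ.symm_apply_apply γ
          rw [hid] at this
          exact hγJ this
    | zero => simpa using zero_mem N
    | add x y hxL hyL hx hy =>
      have : (x + y) - σ (x + y) = (x - σ x) + (y - σ y) := by
        rw [map_add]; abel
      rw [this]; exact add_mem hx hy
    | neg x hxL hx =>
      have : (-x) - σ (-x) = -(x - σ x) := by rw [map_neg]; abel
      rw [this]; exact neg_mem hx
  have hEstep : ∀ δ ∈ Δ \ J, ∀ e : V ≃ₗ[ℚ] V,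
      (∀ x, e x = x - (2 * B x δ / B δ δ) • δ) → ∀ x ∈ L, x - e x ∈ N := by
    intro δ hδ e he x hx
    have hδΦ : δ ∈ Φ := hΔΦ hδ.1
    have hBδ : B δ δ ≠ 0 := hBne hδΦ
    rw [hL] at hx
    induction hx using AddSubgroup.closure_induction with
    | mem γ hγ =>
      obtain ⟨n, hn⟩ := hcrys δ hδΦ γ (hΔΦ hγ)
      have hsc : 2 * B γ δ / B δ δ = (n : ℚ) := by rw [hn]; field_simp
      rw [he γ, sub_sub_cancel, hsc, Int.cast_smul_eq_zsmul]
      exact zsmul_mem (hNmem1 δ hδ) n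
    | zero => simpa using zero_mem N
    | add x y hxL hyL hx hy =>
      have : (x + y) - e (x + y) = (x - e x) + (y - e y) := by
        rw [map_add]; abel
      rw [this]; exact add_mem hx hy
    | neg x hxL hx =>
      have : (-x) - e (-x) = -(x - e x) := by rw [map_neg]; abel
      rw [this]; exact neg_mem hx
  have hHmain : ∀ h ∈ H, (∀ α ∈ Φ, h α ∈ Φ) ∧ (∀ α ∈ Φ, h⁻¹ α ∈ Φ) ∧
      (∀ x ∈ L, x - h x ∈ N) ∧ (∀ x ∈ L, x - h⁻¹ x ∈ N) := by
    intro h hh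
    rw [hH] at hh
    induction hh using Subgroup.closure_induction with
    | mem g hg =>
      rcases hg with hgΓ | ⟨δ, hδ, he⟩
      · refine ⟨?_, ?_, hΓstep g hgΓ, hΓstep g⁻¹ (inv_mem hgΓ)⟩
        · intro α hα
          have : g α ∈ ⇑g '' Φ := ⟨α, hα, rfl⟩
          rwa [hΓΦ g hgΓ] at this
        · intro α hα
          have : g⁻¹ α ∈ ⇑(g⁻¹ : V ≃ₗ[ℚ] V) '' Φ := ⟨α, hα, rfl⟩
          rwa [hΓΦ g⁻¹ (inv_mem hgΓ)] at this
      · have hδΦ : δ ∈ Φ := hΔΦ hδ.1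
        have hgΦ : ∀ α ∈ Φ, g α ∈ Φ := by
          intro α hα
          rw [he α]
          exact hreflect δ hδΦ α hα
        have hginv : ∀ x, g⁻¹ x = g x := by
          intro x
          apply g.injective
          show g (g⁻¹ x) = g (g x)
          rw [hinvol δ hδ g he x]
          exact g.apply_symm_apply x
        refine ⟨hgΦ, ?_, hEstep δ hδ g he, ?_⟩
        · intro α hα; rw [hginv]; exact hgΦ α hα
        · intro x hx; rw [hginv]; exact hEstep δ hδ g he x hx
    | one => refine ⟨fun α hα => by simpa using hα, fun α hα => by simpa using hα,
        fun x hx => by simpa using zero_mem N, fun x hx => by simpa using zero_mem N⟩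
    | mul g k hgH hkH hg hk =>
      obtain ⟨hg1, hg2, hg3, hg4⟩ := hg
      obtain ⟨hk1, hk2, hk3, hk4⟩ := hk
      refine ⟨fun α hα => hg1 _ (hk1 α hα), fun α hα => ?_, fun x hx => ?_, fun x hx => ?_⟩
      · have : (g * k)⁻¹ α = k⁻¹ (g⁻¹ α) := by rw [mul_inv_rev]; rfl
        rw [this]; exact hk2 _ (hg2 α hα)
      · have hkxL : k x ∈ L := by
          have : k x = x - (x - k x) := by abel
          rw [this]; exact sub_mem hx (hNL _ (hk3 x hx))
        have : x - (g * k) x = (x - k x) + (k x - g (k x)) := by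
          show x - g (k x) = (x - k x) + (k x - g (k x)); abel
        rw [this]; exact add_mem (hk3 x hx) (hg3 _ hkxL)
      · have hgxL : g⁻¹ x ∈ L := by
          have : g⁻¹ x = x - (x - g⁻¹ x) := by abel
          rw [this]; exact sub_mem hx (hNL _ (hg4 x hx))
        have : x - (g * k)⁻¹ x = (x - g⁻¹ x) + (g⁻¹ x - k⁻¹ (g⁻¹ x)) := by
          rw [mul_inv_rev]
          show x - k⁻¹ (g⁻¹ x) = (x - g⁻¹ x) + (g⁻¹ x - k⁻¹ (g⁻¹ x)); abel
        rw [this]; exact add_mem (hg4 x hx) (hk4 _ hgxL)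
    | inv g hgH hg =>
      obtain ⟨hg1, hg2, hg3, hg4⟩ := hg
      exact ⟨hg2, by simpa using hg1, hg4, by simpa using hg3⟩
  -- H is finite
  haveI hΦfin' : Finite ↥Φ := hfin.to_subtype
  have Hfin : (↑H : Set (V ≃ₗ[ℚ] V)).Finite := by
    have hsub : (fun (g : V ≃ₗ[ℚ] V) => fun x : ↥Φ => g ↑x) '' ↑H ⊆
        {u : ↥Φ → V | ∀ i, u i ∈ Φ} := by
      rintro _ ⟨g, hg, rfl⟩ i
      exact (hHmain g hg).1 ↑i i.2
    have hfin2 : {u : ↥Φ → V | ∀ i, u i ∈ Φ}.Finite := Set.Finite.pi' (fun _ => hfin)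
    refine Set.Finite.of_finite_image (hfin2.subset hsub) ?_
    intro g hg g' hg' he
    have heq : ∀ x ∈ Φ, g x = g' x := fun x hx => congrFun he ⟨x, hx⟩
    apply LinearEquiv.toLinearMap_injective
    exact LinearMap.ext_on hspan heq
  set HF : Finset (V ≃ₗ[ℚ] V) := Hfin.toFinset with hHFdef
  have hHF : ∀ {g : V ≃ₗ[ℚ] V}, g ∈ HF ↔ g ∈ H := by
    intro g; rw [hHFdef, Set.Finite.mem_toFinset]; rfl
  have h1HF : (1 : V ≃ₗ[ℚ] V) ∈ HF := hHF.mpr (one_mem H)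
  -- the vector p and the functional μ
  set p : V := ∑ h ∈ HF, h b with hp
  set μ : V →ₗ[ℚ] ℚ := ∑ h ∈ HF, (B.flip p).comp (h : V →ₗ[ℚ] V) with hμ
  have hμapp : ∀ x : V, μ x = ∑ h ∈ HF, B (h x) p := by
    intro x
    rw [hμ]
    simp [LinearMap.sum_apply, LinearMap.comp_apply, LinearMap.flip_apply]
  -- μ is H-invariant
  have hμinv : ∀ g ∈ H, ∀ x : V, μ (g x) = μ x := by
    intro g hg x
    rw [hμapp, hμapp]
    refine Finset.sum_bij' (fun h _ => h * g) (fun h _ => h * g⁻¹) ?_ ?_ ?_ ?_ ?_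
    · intro a ha; exact hHF.mpr (mul_mem (hHF.mp ha) hg)
    · intro a ha; exact hHF.mpr (mul_mem (hHF.mp ha) (inv_mem hg))
    · intro a ha; show a * g * g⁻¹ = a; rw [mul_assoc, mul_inv_cancel, mul_one]
    · intro a ha; show a * g⁻¹ * g = a; rw [mul_assoc, inv_mul_cancel, mul_one]
    · intro a ha; rfl
  -- μ vanishes on N
  have hμN : ∀ x ∈ N, μ x = 0 := by
    have hker : AddSubgroup.closure ((Δ \ J) ∪ {x | ∃ α ∈ J, ∃ σ ∈ Γ, x = α - σ α})
        ≤ AddMonoidHom.ker μ.toAddMonoidHom := by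
      refine (AddSubgroup.closure_le _).mpr ?_
      rintro y (⟨hyΔ, hyJ⟩ | ⟨α, hαJ, σ, hσ, rfl⟩) <;>
        refine SetLike.mem_coe.mpr (AddMonoidHom.mem_ker.mpr ?_)
      · show μ y = 0
        obtain ⟨e, heH, hef⟩ := hrex y ⟨hyΔ, hyJ⟩
        have hyΦ : y ∈ Φ := hΔΦ hyΔ
        have h1 : μ (e y) = μ y := hμinv e heH y
        have hsc : 2 * B y y / B y y = 2 := by
          rw [mul_div_assoc, div_self (hBne hyΦ), mul_one]
        have hey : e y = -y := by
          rw [hef y, hsc, two_smul]; abel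
        rw [hey, map_neg] at h1
        linarith
      · show μ (α - σ α) = 0
        rw [map_sub, hμinv σ (hΓH σ hσ) α, sub_self]
    intro x hx
    exact AddMonoidHom.mem_ker.mp (hker (hN ▸ hx))
  -- value at b
  have hμb : μ b = B p p := by
    rw [hμapp]
    have h1 : B p = ∑ h ∈ HF, B (h b) := by rw [hp]; exact map_sum B _ HF
    rw [h1, LinearMap.sum_apply]
  -- p is nonzero
  have hfp : f p = (HF.card : ℚ) := by
    have h1 : f p = ∑ h ∈ HF, f (h b) := by rw [hp]; exact map_sum f _ HF
    have hterm : ∀ h ∈ HF, f (h b) = 1 := by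
      intro h hh
      have hbL : b ∈ L := hΔL b hbΔ
      have h2 : f (b - h b) = 0 := hfN _ ((hHmain h (hHF.mp hh)).2.2.1 b hbL)
      rw [map_sub, hfb] at h2
      linarith
    rw [h1, Finset.sum_congr rfl hterm, Finset.sum_const, nsmul_eq_mul, mul_one]
  have hp0 : p ≠ 0 := by
    intro hzero
    rw [hzero, map_zero] at hfp
    have : HF.card ≠ 0 := Finset.card_ne_zero_of_mem h1HF
    exact this (by exact_mod_cast hfp.symm)
  have hBpp : 0 < B p p := hBpos p hp0
  -- the induced functional on the quotient
  have hNker : N ≤ AddMonoidHom.ker μ.toAddMonoidHom := fun x hx =>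
    AddMonoidHom.mem_ker.mpr (hμN x hx)
  set μq : V ⧸ N →+ ℚ := QuotientAddGroup.lift N μ.toAddMonoidHom hNker with hμqdef
  have hμqmk : ∀ x : V, μq (QuotientAddGroup.mk' N x) = μ x := by
    intro x
    rw [QuotientAddGroup.mk'_apply]
    exact QuotientAddGroup.lift_mk' N hNker x
  -- Φq is symmetric
  have hsymmq : ∀ a ∈ Φq, -a ∈ Φq := by
    rintro a ⟨⟨α, hα, rfl⟩, ha0⟩
    refine ⟨⟨-α, hnegΦ hα, map_neg _ α⟩, ?_⟩
    simpa using ha0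
  -- the key step
  have hkey : ∀ a ∈ Φq, μq a < 0 → a + β = 0 ∨ a + β ∈ Φq := by
    rintro a ⟨⟨α, hαΦ, rfl⟩, ha0⟩ hlt
    rw [hμqmk] at hlt
    have hexp : μ α = ∑ h ∈ HF, ∑ h' ∈ HF, B (h α) (h' b) := by
      rw [hμapp]
      refine Finset.sum_congr rfl ?_
      intro h hh
      rw [hp]
      exact map_sum (B (h α)) _ HF
    have hex : ∃ h ∈ HF, ∃ h' ∈ HF, B (h α) (h' b) < 0 := by
      by_contra hcon
      push_neg at hcon
      have : 0 ≤ μ α := by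
        rw [hexp]
        exact Finset.sum_nonneg fun h hh => Finset.sum_nonneg fun h' hh' => hcon h hh h' hh'
      linarith
    obtain ⟨h, hh, h', hh', hBneg⟩ := hex
    have hhH := hHF.mp hh
    have hh'H := hHF.mp hh'
    have hα₁Φ : h α ∈ Φ := (hHmain h hhH).1 α hαΦ
    have hδ₁Φ : h' b ∈ Φ := (hHmain h' hh'H).1 b hbΦ
    have hπα : QuotientAddGroup.mk' N α = QuotientAddGroup.mk' N (h α) :=
      hπeq _ _ ((hHmain h hhH).2.2.1 α (hΦL α hαΦ))
    have hπb : QuotientAddGroup.mk' N b = QuotientAddGroup.mk' N (h' b) :=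
      hπeq _ _ ((hHmain h' hh'H).2.2.1 b (hΔL b hbΔ))
    have habsum : QuotientAddGroup.mk' N α + β = QuotientAddGroup.mk' N (h α + h' b) := by
      rw [map_add, ← hπα, ← hπb, hbβ]
    by_cases hc : h α = -(h' b)
    · left
      rw [habsum, hc]
      simp
    · have hsum : h α + h' b ∈ Φ :=
        root_add B hBsymm hBpos Φ h0 hreflect hcrys hred hα₁Φ hδ₁Φ hBneg hc
      by_cases hz : QuotientAddGroup.mk' N (h α + h' b) = 0
      · left; rw [habsum]; exact hz
      · right
        rw [habsum]
        exact ⟨⟨_, hsum, rfl⟩, hz⟩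
  -- assemble
  refine ⟨{a | a ∈ Φq ∧ 0 ≤ μq a}, fun a ha => ha.1, ?_, ?_, ?_, ?_⟩
  · -- proper
    intro hSeq
    have hnegβ : -β ∈ Φq := by
      refine ⟨⟨-b, hnegΦ hbΦ, ?_⟩, ?_⟩
      · rw [map_neg, hbβ]
      · simpa using hβne
    have hmem : -β ∈ {a | a ∈ Φq ∧ 0 ≤ μq a} := by rw [hSeq]; exact hnegβ
    have hμβ : μq β = B p p := by rw [← hbβ, hμqmk, hμb]
    have h2 := hmem.2
    rw [map_neg, hμβ] at h2
    linarith
  · -- union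
    apply Set.Subset.antisymm
    · refine Set.union_subset (fun a ha => ha.1) ?_
      rintro _ ⟨a, ha, rfl⟩
      exact hsymmq a ha.1
    · intro a haq
      by_cases hge : 0 ≤ μq a
      · exact Or.inl ⟨haq, hge⟩
      · refine Or.inr ⟨-a, ⟨hsymmq a haq, ?_⟩, ?_⟩
        · rw [map_neg]; linarith
        · simp
  · rintro a₁ ⟨ha₁, hm₁⟩ a₂ ⟨ha₂, hm₂⟩ hq
    refine ⟨hq, ?_⟩
    rw [map_add]
    linarith
  · intro a haq hnot hne0
    by_contra hnS
    have hlt : μq a < 0 := by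
      by_contra hge
      push_neg at hge
      exact hnS ⟨haq, hge⟩
    rcases hkey a haq hlt with hcase | hcase
    · exact hne0 hcase
    · exact hnot hcase
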